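/- Let L' ⊆ L_Z(ω) be any language such that: (a) L_R(ω) ⊆ L'; and (b) every word w ∈ L' \ L_R(ω) admits a factorization w = w₁ u w₂ v w₃ such that (1) φ(u) is stable, ω(u) > 0, and the weight of every prefix of w₁u is nonnegative, and (2) φ(v) is stable, ω(v) < 0, and the weight of every suffix of v w₃ is nonpositive. Then the Zariski closure of φ(L_R(ω)) in M_d(ℚ̄) equals the Zariski closure of φ(L'). -/

import Mathlib

noncomputable section

/-- A matrix `M` is *stable* if `rank M = rank M²`. -/
def MatStable {d : ℕ} (M : Matrix (Fin d) (Fin d) ℚ) : Prop :=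
  M.rank = (M * M).rank

/-- The algebraic closure of `ℚ`. -/
abbrev Qbar : Type := AlgebraicClosure ℚ

/-- View a rational matrix inside `M_d(ℚ̄)`. -/
def liftMat {d : ℕ} (M : Matrix (Fin d) (Fin d) ℚ) : Matrix (Fin d) (Fin d) Qbar :=
  M.map (algebraMap ℚ Qbar)

/-- The Zariski closure of a set of `d × d` matrices over `ℚ̄`, identified with affine
space `ℚ̄^(d²)`: the common zero set of all polynomials vanishing on the set. -/
def matZClosure (d : ℕ) (S : Set (Matrix (Fin d) (Fin d) Qbar)) :
    Set (Matrix (Fin d) (Fin d) Qbar) :=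
  {A | ∀ p : MvPolynomial (Fin d × Fin d) Qbar,
      (∀ B ∈ S, MvPolynomial.eval (fun ij => B ij.1 ij.2) p = 0) →
      MvPolynomial.eval (fun ij => A ij.1 ij.2) p = 0}

/-- The reachability language of `ω`: words of weight zero all of whose prefixes have
nonnegative weight. -/
def reachLang {α : Type*} (ω : List α → ℤ) : Set (List α) :=
  {w | ω w = 0 ∧ ∀ u : List α, u <+: w → 0 ≤ ω u}

/-- The zero-weight language of `ω`. -/
def zeroLang {α : Type*} (ω : List α → ℤ) : Set (List α) :=
  {w | ω w = 0}


/-! ### Auxiliary development -/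

section MatrixStable

open Matrix Module

variable {K : Type*} [Field K] {d : ℕ}

/-- For a stable matrix, range of `N ^ (t+1)` equals range of `N`. -/
lemma range_pow_eq_of_stable (N : Matrix (Fin d) (Fin d) K) (h : N.rank = (N * N).rank) :
    ∀ t : ℕ, LinearMap.range (N ^ (t + 1)).mulVecLin = LinearMap.range N.mulVecLin := by
  have hle : LinearMap.range (N * N).mulVecLin ≤ LinearMap.range N.mulVecLin := by
    rw [Matrix.mulVecLin_mul, LinearMap.range_comp]
    exact LinearMap.map_le_range
  have heq : LinearMap.range (N * N).mulVecLin = LinearMap.range N.mulVecLin := by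
    apply Submodule.eq_of_le_of_finrank_le hle
    exact le_of_eq h
  intro t
  induction t with
  | zero => simp [pow_one]
  | succ t ih =>
    have : N ^ (t + 2) = N ^ t * (N * N) := by rw [pow_add, pow_two]
    rw [this, Matrix.mulVecLin_mul, LinearMap.range_comp, heq,
      ← LinearMap.range_comp, ← Matrix.mulVecLin_mul, ← pow_succ, ih]

/-- Column-selection: from range inclusion get a matrix factorization. -/
lemma exists_factor_of_range_le (A B : Matrix (Fin d) (Fin d) K)
    (h : LinearMap.range B.mulVecLin ≤ LinearMap.range A.mulVecLin) :
    ∃ C : Matrix (Fin d) (Fin d) K, A * C = B := by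
  have hcol : ∀ j : Fin d, ∃ v : Fin d → K, A.mulVec v = B.mulVec (Pi.single j 1) := by
    intro j
    have : B.mulVec (Pi.single j 1) ∈ LinearMap.range B.mulVecLin :=
      ⟨Pi.single j 1, rfl⟩
    exact h this
  choose v hv using hcol
  refine ⟨Matrix.of fun i j => v j i, ?_⟩
  ext i j
  have := congrFun (hv j) i
  simpa [Matrix.mulVec, Matrix.mul_apply, dotProduct, Pi.single_apply,
    Finset.sum_ite_eq', mul_comm] using this

/-- Stability factorization: `N * B` factors through `N ^ (t+1)`. -/
lemma stable_factor (N : Matrix (Fin d) (Fin d) K) (h : N.rank = (N * N).rank)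
    (t : ℕ) (B : Matrix (Fin d) (Fin d) K) :
    ∃ C : Matrix (Fin d) (Fin d) K, N ^ (t + 1) * C = N * B := by
  apply exists_factor_of_range_le
  rw [range_pow_eq_of_stable N h t]
  rw [Matrix.mulVecLin_mul, LinearMap.range_comp]
  exact LinearMap.map_le_range

end MatrixStable

section GoodSequences

variable {F : Type*} [Field F]

/-- The shift operator on sequences, as an algebra homomorphism. -/
def shiftA (F : Type*) [Field F] : (ℕ → F) →ₐ[F] (ℕ → F) where
  toFun f := fun k => f (k + 1)
  map_one' := rfl
  map_mul' _ _ := rfl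
  map_zero' := rfl
  map_add' _ _ := rfl
  commutes' _ := rfl

/-- Sequences lying in a finite-dimensional shift-stable space on which shift is onto. -/
def GoodSeq (F : Type*) [Field F] : Subalgebra F (ℕ → F) where
  carrier := {f | ∃ V : Submodule F (ℕ → F), FiniteDimensional F V ∧
      Submodule.map (shiftA F).toLinearMap V = V ∧ f ∈ V}
  mul_mem' := by
    rintro f g ⟨V, hV, hVs, hfV⟩ ⟨W, hW, hWs, hgW⟩
    refine ⟨V * W, ?_, ?_, Submodule.mul_mem_mul hfV hgW⟩
    · rw [← Submodule.fg_iff_finiteDimensional]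
      exact Submodule.FG.mul ((Submodule.fg_iff_finiteDimensional V).2 hV)
        ((Submodule.fg_iff_finiteDimensional W).2 hW)
    · rw [Submodule.map_mul V W (shiftA F), hVs, hWs]
  add_mem' := by
    rintro f g ⟨V, hV, hVs, hfV⟩ ⟨W, hW, hWs, hgW⟩
    refine ⟨V ⊔ W, ?_, ?_, ?_⟩
    · exact Submodule.finiteDimensional_sup V W
    · rw [Submodule.map_sup, hVs, hWs]
    · exact Submodule.add_mem_sup hfV hgW
  algebraMap_mem' := by
    intro c
    refine ⟨Submodule.span F {(1 : ℕ → F)}, ?_, ?_, ?_⟩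
    · infer_instance
    · rw [Submodule.map_span]
      congr 1
      simp only [Set.image_singleton]
      congr 1
    · have : (algebraMap F (ℕ → F)) c = c • (1 : ℕ → F) := by
        ext k; simp [Algebra.algebraMap_eq_smul_one]
      rw [this]
      exact Submodule.smul_mem _ _ (Submodule.mem_span_singleton_self _)

/-- A good sequence vanishing from some index on vanishes everywhere. -/
lemma GoodSeq.eq_zero_of_eventually {f : ℕ → F} (hf : f ∈ GoodSeq F)
    {K : ℕ} (h : ∀ k, K ≤ k → f k = 0) : f = 0 := by
  obtain ⟨V, hV, hVs, hfV⟩ := hf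
  have hmapsTo : ∀ v ∈ V, (shiftA F) v ∈ V := by
    intro v hv
    rw [← hVs]
    exact ⟨v, hv, rfl⟩
  let T : V →ₗ[F] V := (shiftA F).toLinearMap.restrict hmapsTo
  have hTsurj : Function.Surjective T := by
    rintro ⟨v, hv⟩
    rw [← hVs] at hv
    obtain ⟨u, hu, huv⟩ := hv
    exact ⟨⟨u, hu⟩, Subtype.ext huv⟩
  have hTinj : Function.Injective T :=
    (LinearMap.injective_iff_surjective (f := T)).2 hTsurj
  have key : ∀ n : ℕ, ∀ v, v ∈ V → (∀ k, v (k + n) = 0) → v = 0 := by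
    intro n
    induction n with
    | zero => intro v _ hv; funext k; simpa using hv k
    | succ n ih =>
      intro v hvV hv
      have hs : (shiftA F) v = 0 := by
        apply ih _ (hmapsTo v hvV)
        intro k
        show v (k + n + 1) = 0
        have : k + n + 1 = k + (n + 1) := by omega
        rw [this]; exact hv k
      have : T ⟨v, hvV⟩ = 0 := Subtype.ext hs
      have := hTinj (a₁ := ⟨v, hvV⟩) (a₂ := 0) (by simpa [map_zero] using this)
      simpa using congrArg Subtype.val this
  apply key K f hfV
  intro k
  exact h (k + K) (by omega)

/-- Entries of `k ↦ N * (N^a)^k` are good sequences, for stable `N`. -/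
lemma goodSeq_entry {d : ℕ} (N : Matrix (Fin d) (Fin d) F) (h : N.rank = (N * N).rank)
    (a : ℕ) (i j : Fin d) :
    (fun k => (N * (N ^ a) ^ k) i j) ∈ GoodSeq F := by
  classical
  let Θ : Matrix (Fin d) (Fin d) F →ₗ[F] (ℕ → F) :=
    { toFun := fun Q => fun k => (N * (N ^ a) ^ k * Q) i j
      map_add' := by intro Q Q'; funext k; simp [Matrix.mul_add]
      map_smul' := by intro c Q; funext k; simp [Matrix.mul_smul] }
  have keyshift : ∀ Q : Matrix (Fin d) (Fin d) F,
      (shiftA F).toLinearMap (Θ Q) = Θ (N ^ a * Q) := by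
    intro Q
    funext k
    show (N * (N ^ a) ^ (k + 1) * Q) i j = (N * (N ^ a) ^ k * (N ^ a * Q)) i j
    rw [pow_succ, ← mul_assoc, mul_assoc (N * (N ^ a) ^ k)]
  refine ⟨LinearMap.range Θ, ?_, ?_, ⟨1, by funext k; simp [Θ]⟩⟩
  · exact Module.Finite.range Θ
  · apply le_antisymm
    · rintro x ⟨y, ⟨Q, rfl⟩, rfl⟩
      exact ⟨N ^ a * Q, (keyshift Q).symm⟩
    · rintro x ⟨Q, rfl⟩
      obtain ⟨C, hC⟩ := stable_factor N h a Q
      refine ⟨Θ C, ⟨C, rfl⟩, ?_⟩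
      rw [keyshift C]
      show (fun k => (N * (N ^ a) ^ k * (N ^ a * C)) i j)
        = fun k => (N * (N ^ a) ^ k * Q) i j
      funext k
      have e1 : N * (N ^ a) ^ k = N ^ (a * k + 1) := by rw [← pow_mul, ← pow_succ']
      have key : N * (N ^ a) ^ k * (N ^ a * C) = N * (N ^ a) ^ k * Q := by
        rw [e1]
        calc N ^ (a * k + 1) * (N ^ a * C)
            = N ^ (a * k) * (N ^ (a + 1) * C) := by
              have hx : a * k + 1 + a = a * k + (a + 1) := by omega
              rw [← mul_assoc, ← pow_add, hx, pow_add, mul_assoc]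
          _ = N ^ (a * k) * (N * Q) := by rw [hC]
          _ = N ^ (a * k + 1) * Q := by rw [← mul_assoc, ← pow_succ]
      rw [key]

end GoodSequences

namespace ReachAux

variable {α : Type*}

/-- `wpow u n` is `u` repeated `n` times. -/
def wpow (u : List α) : ℕ → List α
  | 0 => []
  | n + 1 => u ++ wpow u n

lemma prefix_cases {X Y p : List α} (h : p <+: X ++ Y) :
    p <+: X ∨ ∃ q, q <+: Y ∧ p = X ++ q := by
  obtain ⟨t, ht⟩ := h
  rcases List.append_eq_append_iff.1 ht with ⟨a', ha1, _⟩ | ⟨c', hc1, hc2⟩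
  · exact Or.inl ⟨a', ha1.symm⟩
  · exact Or.inr ⟨c', ⟨t, hc2.symm⟩, hc1⟩

lemma suffix_cases {X Y s : List α} (h : s <:+ X ++ Y) :
    s <:+ Y ∨ ∃ s', s' <:+ X ∧ s = s' ++ Y := by
  obtain ⟨t, ht⟩ := h
  rcases List.append_eq_append_iff.1 ht with ⟨a', ha1, ha2⟩ | ⟨c', hc1, hc2⟩
  · exact Or.inr ⟨a', ⟨t, ha1.symm⟩, ha2⟩
  · exact Or.inl ⟨c', hc2.symm⟩

lemma wpow_comm (u : List α) (n : ℕ) : u ++ wpow u n = wpow u n ++ u := by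
  induction n with
  | zero => simp [wpow]
  | succ n ih =>
    show u ++ (u ++ wpow u n) = (u ++ wpow u n) ++ u
    rw [List.append_assoc, ih]

lemma phi_wpow {M : Type*} [Monoid M] (φ : List α → M) (h1 : φ [] = 1)
    (happ : ∀ x y : List α, φ (x ++ y) = φ x * φ y) (u : List α) :
    ∀ n, φ (wpow u n) = φ u ^ n := by
  intro n
  induction n with
  | zero => simpa [wpow] using h1
  | succ n ih => rw [wpow, happ, ih, pow_succ']

section Weight

variable (ω : List α → ℤ) (hω_nil : ω [] = 0)
  (hω_app : ∀ u v : List α, ω (u ++ v) = ω u + ω v)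
  (hω_letter : ∀ σ : α, ω [σ] = -1 ∨ ω [σ] = 0 ∨ ω [σ] = 1)

include hω_nil hω_app

lemma omega_wpow (u : List α) : ∀ n : ℕ, ω (wpow u n) = n * ω u := by
  intro n
  induction n with
  | zero => simpa [wpow] using hω_nil
  | succ n ih => rw [wpow, hω_app, ih]; push_cast; ring

include hω_letter in
lemma omega_ge_neg_length : ∀ q : List α, -(q.length : ℤ) ≤ ω q := by
  intro q
  induction q with
  | nil => simp [hω_nil]
  | cons σ q ih =>
    have : ω (σ :: q) = ω [σ] + ω q := by
      have := hω_app [σ] q; simpa using this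
    rw [this]
    have hσ := hω_letter σ
    simp only [List.length_cons]
    push_cast
    rcases hσ with h | h | h <;> rw [h] <;> omega

/-- All prefixes of `w₁ ++ u^m` have nonnegative weight. -/
lemma prefix_pump (w₁ u : List α) (hu : 0 < ω u)
    (H1 : ∀ p : List α, p <+: (w₁ ++ u) → 0 ≤ ω p) :
    ∀ m, ∀ p : List α, p <+: w₁ ++ wpow u m → 0 ≤ ω p := by
  intro m
  induction m with
  | zero =>
    intro p hp
    simp only [wpow, List.append_nil] at hp
    exact H1 p (hp.trans (List.prefix_append w₁ u))
  | succ m ih =>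
    intro p hp
    rw [wpow, wpow_comm, ← List.append_assoc] at hp
    rcases prefix_cases hp with h | ⟨q, hq, rfl⟩
    · exact ih p h
    · have hq1 : 0 ≤ ω (w₁ ++ q) := by
        apply H1
        obtain ⟨t, ht⟩ := hq
        exact ⟨t, by rw [List.append_assoc, ht]⟩
      rw [hω_app] at hq1 ⊢
      rw [hω_app, omega_wpow ω hω_nil hω_app]
      have : 0 ≤ (m : ℤ) * ω u := by positivity
      omega

/-- All suffixes of `v^m ++ w₃` have nonpositive weight. -/
lemma suffix_pump (v w₃ : List α) (hv : ω v < 0)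
    (H2 : ∀ s : List α, s <:+ (v ++ w₃) → ω s ≤ 0) :
    ∀ m, ∀ s : List α, s <:+ wpow v m ++ w₃ → ω s ≤ 0 := by
  intro m
  induction m with
  | zero =>
    intro s hs
    simp only [wpow, List.nil_append] at hs
    exact H2 s (hs.trans (List.suffix_append v w₃))
  | succ m ih =>
    intro s hs
    rw [wpow, List.append_assoc] at hs
    rcases suffix_cases hs with h | ⟨s', hs', rfl⟩
    · exact ih s h
    · have hs1 : ω (s' ++ w₃) ≤ 0 := by
        apply H2
        obtain ⟨t, ht⟩ := hs'
        exact ⟨t, by rw [← List.append_assoc, ht]⟩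
      rw [hω_app] at hs1 ⊢
      rw [hω_app, omega_wpow ω hω_nil hω_app]
      have : (m : ℤ) * ω v ≤ 0 := by
        apply mul_nonpos_of_nonneg_of_nonpos <;> [positivity; omega]
      omega

include hω_letter in
lemma pumped_mem_reach (w₁ u w₂ v w₃ : List α)
    (hu : 0 < ω u) (H1 : ∀ p : List α, p <+: (w₁ ++ u) → 0 ≤ ω p)
    (hv : ω v < 0) (H2 : ∀ s : List α, s <:+ (v ++ w₃) → ω s ≤ 0)
    (hw0 : ω (w₁ ++ u ++ w₂ ++ v ++ w₃) = 0)
    (k : ℕ) (hk : w₂.length ≤ k) :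
    ω (w₁ ++ wpow u (1 + k * (-ω v).toNat) ++ w₂ ++ wpow v (1 + k * (ω u).toNat) ++ w₃) = 0 ∧
    ∀ p : List α,
      p <+: (w₁ ++ wpow u (1 + k * (-ω v).toNat) ++ w₂ ++ wpow v (1 + k * (ω u).toNat) ++ w₃) →
      0 ≤ ω p := by
  set a' : ℕ := (-ω v).toNat with ha'def
  set b' : ℕ := (ω u).toNat with hb'def
  have ha' : (a' : ℤ) = -ω v := Int.toNat_of_nonneg (by omega)
  have hb' : (b' : ℤ) = ω u := Int.toNat_of_nonneg (by omega)
  set A : ℕ := 1 + k * a' with hAdef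
  set B : ℕ := 1 + k * b' with hBdef
  have hωU : ω (wpow u A) = A * ω u := omega_wpow ω hω_nil hω_app u A
  have hωV : ω (wpow v B) = B * ω v := omega_wpow ω hω_nil hω_app v B
  simp only [hω_app] at hw0
  have htotal : ω (w₁ ++ wpow u A ++ w₂ ++ wpow v B ++ w₃) = 0 := by
    simp only [hω_app]
    rw [hωU, hωV]
    simp only [hAdef, hBdef]
    push_cast
    linear_combination hw0 + (k : ℤ) * ω u * ha' + (k : ℤ) * ω v * hb'
  refine ⟨htotal, ?_⟩
  intro p hp
  have hassoc : w₁ ++ wpow u A ++ w₂ ++ wpow v B ++ w₃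
      = (w₁ ++ wpow u A) ++ (w₂ ++ (wpow v B ++ w₃)) := by
    simp [List.append_assoc]
  rw [hassoc] at hp
  rcases prefix_cases hp with h | ⟨q, hq, rfl⟩
  · exact prefix_pump ω hω_nil hω_app w₁ u hu H1 A p h
  · rcases prefix_cases hq with h2 | ⟨q', hq', rfl⟩
    · have hw₁ : 0 ≤ ω w₁ := H1 w₁ (List.prefix_append w₁ u)
      have hqlen : -(q.length : ℤ) ≤ ω q :=
        omega_ge_neg_length ω hω_nil hω_app hω_letter q
      have hlen : (q.length : ℤ) ≤ (k : ℤ) := by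
        have := h2.length_le
        exact_mod_cast le_trans (Nat.cast_le.mpr this) (Nat.cast_le.mpr hk)
      simp only [hω_app, hωU]
      have ha1 : (1 : ℤ) ≤ (a' : ℤ) := by omega
      have hb1 : (1 : ℤ) ≤ ω u := by omega
      have hA : (A : ℤ) = 1 + (k : ℤ) * (a' : ℤ) := by rw [hAdef]; push_cast; ring
      have h1 : (k : ℤ) * 1 ≤ (k : ℤ) * (a' : ℤ) :=
        mul_le_mul_of_nonneg_left ha1 (by positivity)
      have h2' : (A : ℤ) * 1 ≤ (A : ℤ) * ω u :=
        mul_le_mul_of_nonneg_left hb1 (by positivity)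
      linarith [hw₁, hqlen, hlen, h1, h2', hA]
    · obtain ⟨s, hs⟩ := hq'
      have hsuf : ω s ≤ 0 :=
        suffix_pump ω hω_nil hω_app v w₃ hv H2 B s ⟨q', hs⟩
      have hqs : ω q' + ω s = ω (wpow v B) + ω w₃ := by
        have := congrArg ω hs
        rw [hω_app, hω_app] at this
        exact this
      simp only [hω_app] at htotal ⊢
      linarith [hsuf, hqs, htotal]

end Weight

end ReachAux

section Glue

/-- Entries of a product of matrices with entries in a subalgebra lie in the subalgebra. -/
lemma matrix_mul_mem {R A : Type*} [CommSemiring R] [CommSemiring A] [Algebra R A]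
    (S : Subalgebra R A) {n : ℕ} {M N : Matrix (Fin n) (Fin n) A}
    (hM : ∀ i j, M i j ∈ S) (hN : ∀ i j, N i j ∈ S) : ∀ i j, (M * N) i j ∈ S := by
  intro i j
  rw [Matrix.mul_apply]
  exact sum_mem fun k _ => S.mul_mem (hM i k) (hN k j)

/-- Polynomial evaluation at elements of a subalgebra lies in the subalgebra. -/
lemma aeval_mem_subalgebra {R A σ : Type*} [CommSemiring R] [CommSemiring A] [Algebra R A]
    (S : Subalgebra R A) (g : σ → A) (hg : ∀ s, g s ∈ S) (p : MvPolynomial σ R) :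
    MvPolynomial.aeval g p ∈ S := by
  induction p using MvPolynomial.induction_on with
  | C c => simp only [MvPolynomial.aeval_C]; exact S.algebraMap_mem c
  | add p q hp hq => rw [map_add]; exact S.add_mem hp hq
  | mul_X p s hp => rw [map_mul, MvPolynomial.aeval_X]; exact S.mul_mem hp (hg s)

lemma liftMat_mul {d : ℕ} (X Y : Matrix (Fin d) (Fin d) ℚ) :
    liftMat (X * Y) = liftMat X * liftMat Y :=
  map_mul ((algebraMap ℚ Qbar).mapMatrix) X Y

lemma liftMat_pow {d : ℕ} (X : Matrix (Fin d) (Fin d) ℚ) (n : ℕ) :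
    liftMat (X ^ n) = liftMat X ^ n :=
  map_pow ((algebraMap ℚ Qbar).mapMatrix) X n

/-- Stability transfers from `ℚ` to `ℚ̄`. -/
lemma liftMat_stable {d : ℕ} (M : Matrix (Fin d) (Fin d) ℚ) (h : MatStable M) :
    (liftMat M).rank = (liftMat M * liftMat M).rank := by
  obtain ⟨C, hC⟩ := stable_factor M h 1 1
  have hC' : M * M * C = M := by
    have : M ^ (1 + 1) = M * M := by rw [pow_two]
    rw [this] at hC
    simpa using hC
  have hlift : liftMat M * liftMat M * liftMat C = liftMat M := by
    rw [← liftMat_mul, ← liftMat_mul, hC']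
  apply le_antisymm
  · conv_lhs => rw [← hlift]
    exact Matrix.rank_mul_le_left _ _
  · exact Matrix.rank_mul_le_left _ _

/-- Core algebraic step: if a polynomial vanishes on the pumped family for all large `k`,
it vanishes at the unpumped value. -/
lemma eval_zero_of_eventually_pumped {d : ℕ}
    (A₁ U A₂ V A₃ : Matrix (Fin d) (Fin d) Qbar)
    (hU : U.rank = (U * U).rank) (hV : V.rank = (V * V).rank)
    (a b : ℕ) (p : MvPolynomial (Fin d × Fin d) Qbar) (K : ℕ)
    (hvan : ∀ k, K ≤ k → MvPolynomial.eval
      (fun ij => (A₁ * (U * (U ^ a) ^ k) * A₂ * (V * (V ^ b) ^ k) * A₃) ij.1 ij.2) p = 0) :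
    MvPolynomial.eval (fun ij => (A₁ * U * A₂ * V * A₃) ij.1 ij.2) p = 0 := by
  classical
  let cst : Matrix (Fin d) (Fin d) Qbar → Matrix (Fin d) (Fin d) (ℕ → Qbar) :=
    fun M => M.map (algebraMap Qbar (ℕ → Qbar))
  let XU : Matrix (Fin d) (Fin d) (ℕ → Qbar) :=
    Matrix.of fun i j => fun k => (U * (U ^ a) ^ k) i j
  let XV : Matrix (Fin d) (Fin d) (ℕ → Qbar) :=
    Matrix.of fun i j => fun k => (V * (V ^ b) ^ k) i j
  let E : Matrix (Fin d) (Fin d) (ℕ → Qbar) := cst A₁ * XU * cst A₂ * XV * cst A₃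
  let g : Fin d × Fin d → (ℕ → Qbar) := fun ij => E ij.1 ij.2
  have hmapE : ∀ k : ℕ, (Pi.evalRingHom (fun _ : ℕ => Qbar) k).mapMatrix E
      = A₁ * (U * (U ^ a) ^ k) * A₂ * (V * (V ^ b) ^ k) * A₃ := by
    intro k
    have hcst : ∀ M : Matrix (Fin d) (Fin d) Qbar,
        (Pi.evalRingHom (fun _ : ℕ => Qbar) k).mapMatrix (cst M) = M := by
      intro M; ext i j; rfl
    have hXU : (Pi.evalRingHom (fun _ : ℕ => Qbar) k).mapMatrix XU = U * (U ^ a) ^ k := by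
      ext i j; rfl
    have hXV : (Pi.evalRingHom (fun _ : ℕ => Qbar) k).mapMatrix XV = V * (V ^ b) ^ k := by
      ext i j; rfl
    show (Pi.evalRingHom (fun _ : ℕ => Qbar) k).mapMatrix (cst A₁ * XU * cst A₂ * XV * cst A₃)
      = _
    rw [map_mul, map_mul, map_mul, map_mul, hcst, hcst, hcst, hXU, hXV]
  have hFk : ∀ k : ℕ, (MvPolynomial.aeval g p : ℕ → Qbar) k
      = MvPolynomial.eval
        (fun ij => (A₁ * (U * (U ^ a) ^ k) * A₂ * (V * (V ^ b) ^ k) * A₃) ij.1 ij.2) p := by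
    intro k
    have hcomp : (Pi.evalRingHom (fun _ : ℕ => Qbar) k).comp (algebraMap Qbar (ℕ → Qbar))
        = RingHom.id Qbar := by
      ext x; rfl
    have h1 : (Pi.evalRingHom (fun _ : ℕ => Qbar) k) (MvPolynomial.aeval g p)
        = MvPolynomial.eval₂ (RingHom.id Qbar)
            (fun ij => (Pi.evalRingHom (fun _ : ℕ => Qbar) k) (g ij)) p := by
      rw [MvPolynomial.aeval_def, MvPolynomial.eval₂_comp_left, hcomp]
      rfl
    have h2 : (fun ij : Fin d × Fin d => (Pi.evalRingHom (fun _ : ℕ => Qbar) k) (g ij))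
        = fun ij => (A₁ * (U * (U ^ a) ^ k) * A₂ * (V * (V ^ b) ^ k) * A₃) ij.1 ij.2 := by
      funext ij
      show ((Pi.evalRingHom (fun _ : ℕ => Qbar) k).mapMatrix E) ij.1 ij.2 = _
      rw [hmapE k]
    show (Pi.evalRingHom (fun _ : ℕ => Qbar) k) (MvPolynomial.aeval g p) = _
    rw [h1, h2, MvPolynomial.eval₂_id]
  have hgmem : ∀ ij : Fin d × Fin d, g ij ∈ GoodSeq Qbar := by
    have hc : ∀ M : Matrix (Fin d) (Fin d) Qbar, ∀ i j, (cst M) i j ∈ GoodSeq Qbar := by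
      intro M i j
      exact (GoodSeq Qbar).algebraMap_mem (M i j)
    have hXU : ∀ i j, XU i j ∈ GoodSeq Qbar := fun i j => goodSeq_entry U hU a i j
    have hXV : ∀ i j, XV i j ∈ GoodSeq Qbar := fun i j => goodSeq_entry V hV b i j
    intro ij
    exact matrix_mul_mem _ (matrix_mul_mem _ (matrix_mul_mem _
      (matrix_mul_mem _ (hc A₁) hXU) (hc A₂)) hXV) (hc A₃) ij.1 ij.2
  have hFmem : (MvPolynomial.aeval g p : ℕ → Qbar) ∈ GoodSeq Qbar :=
    aeval_mem_subalgebra _ g hgmem p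
  have hF0 : (MvPolynomial.aeval g p : ℕ → Qbar) = 0 :=
    GoodSeq.eq_zero_of_eventually hFmem (K := K)
      (fun k hk => (hFk k).trans (hvan k hk))
  have h0 := congrFun hF0 0
  rw [hFk 0] at h0
  simpa [pow_zero, mul_one] using h0

end Glue

theorem reach_closure_of_approximation {α : Type*} [Fintype α] (d : ℕ)
    (φ : List α → Matrix (Fin d) (Fin d) ℚ)
    (hφ_nil : φ [] = 1) (hφ_app : ∀ u v : List α, φ (u ++ v) = φ u * φ v)
    (ω : List α → ℤ)
    (hω_nil : ω [] = 0) (hω_app : ∀ u v : List α, ω (u ++ v) = ω u + ω v)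
    (hω_letter : ∀ σ : α, ω [σ] = -1 ∨ ω [σ] = 0 ∨ ω [σ] = 1)
    (L' : Set (List α))
    (hLZ : L' ⊆ zeroLang ω)
    (hsub : reachLang ω ⊆ L')
    (hfac : ∀ w ∈ L' \ reachLang ω,
        ∃ w₁ u w₂ v w₃ : List α, w = w₁ ++ u ++ w₂ ++ v ++ w₃ ∧
          (MatStable (φ u) ∧ 0 < ω u ∧ ∀ p : List α, p <+: (w₁ ++ u) → 0 ≤ ω p) ∧
          (MatStable (φ v) ∧ ω v < 0 ∧ ∀ s : List α, s <:+ (v ++ w₃) → ω s ≤ 0)) :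
    matZClosure d ((fun w => liftMat (φ w)) '' reachLang ω) =
      matZClosure d ((fun w => liftMat (φ w)) '' L') := by
  classical
  have key : ∀ p : MvPolynomial (Fin d × Fin d) Qbar,
      (∀ B ∈ (fun w => liftMat (φ w)) '' reachLang ω,
        MvPolynomial.eval (fun ij => B ij.1 ij.2) p = 0) →
      ∀ w ∈ L', MvPolynomial.eval (fun ij => (liftMat (φ w)) ij.1 ij.2) p = 0 := by
    intro p hp w hw
    by_cases hreach : w ∈ reachLang ω
    · exact hp _ ⟨w, hreach, rfl⟩
    · obtain ⟨w₁, u, w₂, v, w₃, hweq, ⟨hsU, huω, H1⟩, ⟨hsV, hvω, H2⟩⟩ :=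
        hfac w ⟨hw, hreach⟩
      have hwz : ω w = 0 := hLZ hw
      rw [hweq] at hwz
      set a : ℕ := (-ω v).toNat with hadef
      set b : ℕ := (ω u).toNat with hbdef
      have hUst : (liftMat (φ u)).rank = (liftMat (φ u) * liftMat (φ u)).rank :=
        liftMat_stable _ hsU
      have hVst : (liftMat (φ v)).rank = (liftMat (φ v) * liftMat (φ v)).rank :=
        liftMat_stable _ hsV
      have hvan : ∀ k, w₂.length ≤ k → MvPolynomial.eval
          (fun ij => (liftMat (φ w₁) * (liftMat (φ u) * (liftMat (φ u) ^ a) ^ k) *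
            liftMat (φ w₂) * (liftMat (φ v) * (liftMat (φ v) ^ b) ^ k) *
            liftMat (φ w₃)) ij.1 ij.2) p = 0 := by
        intro k hk
        obtain ⟨hz, hpre⟩ := ReachAux.pumped_mem_reach ω hω_nil hω_app hω_letter
          w₁ u w₂ v w₃ huω H1 hvω H2 hwz k hk
        rw [← hadef, ← hbdef] at hz hpre
        set Wk : List α := w₁ ++ ReachAux.wpow u (1 + k * a) ++ w₂ ++
          ReachAux.wpow v (1 + k * b) ++ w₃ with hWkdef
        have hWmem : Wk ∈ reachLang ω := ⟨hz, hpre⟩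
        have hpowu : φ (ReachAux.wpow u (1 + k * a)) = φ u ^ (1 + k * a) :=
          ReachAux.phi_wpow φ hφ_nil hφ_app u (1 + k * a)
        have hpowv : φ (ReachAux.wpow v (1 + k * b)) = φ v ^ (1 + k * b) :=
          ReachAux.phi_wpow φ hφ_nil hφ_app v (1 + k * b)
        have hsplit : liftMat (φ Wk) = liftMat (φ w₁) *
            (liftMat (φ u) * (liftMat (φ u) ^ a) ^ k) * liftMat (φ w₂) *
            (liftMat (φ v) * (liftMat (φ v) ^ b) ^ k) * liftMat (φ w₃) := by
          have hpow' : ∀ (N : Matrix (Fin d) (Fin d) Qbar) (m j : ℕ),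
              N ^ (1 + j * m) = N * (N ^ m) ^ j := by
            intro N m j
            rw [← pow_mul, pow_add, pow_one, Nat.mul_comm j m]
          rw [hWkdef, hφ_app, hφ_app, hφ_app, hφ_app, hpowu, hpowv,
            liftMat_mul, liftMat_mul, liftMat_mul, liftMat_mul,
            liftMat_pow, liftMat_pow, hpow', hpow']
        rw [← hsplit]
        exact hp _ ⟨Wk, hWmem, rfl⟩
      have hfinal := eval_zero_of_eventually_pumped
        (liftMat (φ w₁)) (liftMat (φ u)) (liftMat (φ w₂)) (liftMat (φ v)) (liftMat (φ w₃))
        hUst hVst a b p w₂.length hvan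
      have hw' : liftMat (φ w) = liftMat (φ w₁) * liftMat (φ u) * liftMat (φ w₂) *
          liftMat (φ v) * liftMat (φ w₃) := by
        rw [hweq, hφ_app, hφ_app, hφ_app, hφ_app,
          liftMat_mul, liftMat_mul, liftMat_mul, liftMat_mul]
      rw [hw']
      exact hfinal
  ext A
  simp only [matZClosure, Set.mem_setOf_eq]
  constructor
  · intro hA q hq
    apply hA q
    rintro B ⟨w, hwmem, rfl⟩
    exact hq _ ⟨w, hsub hwmem, rfl⟩
  · intro hA q hq
    apply hA q
    rintro B ⟨w, hwmem, rfl⟩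
    exact key q hq w hwmem

end
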